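/- For any ε > 0 and ρ > e^ε, there is no randomized approval-based committee rule satisfying both ε-DP and ρ-proportional justified representation, assuming n = s·k for some integer s ≥ 1 and m ≥ k+2. -/
import Mathlib


open scoped Classical

noncomputable section

/-- A profile assigns to each of the `n` voters an approval ballot (a finite set of alternatives). -/
abbrev Profile (A : Type) (n : ℕ) := Fin n → Finset A

/-- Two profiles are neighboring if they differ in at most one voter's ballot. -/
def Neighboring {A : Type} {n : ℕ} (P P' : Profile A n) : Prop :=
  ∃ i : Fin n, ∀ j : Fin n, j ≠ i → P j = P' j

/-- `W'` Pareto-dominates `W` in profile `P`. -/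
def ParetoDom {A : Type} [DecidableEq A] {n : ℕ} (P : Profile A n) (W' W : Finset A) : Prop :=
  (∀ i, (W ∩ P i).card ≤ (W' ∩ P i).card) ∧ (∃ i, (W ∩ P i).card < (W' ∩ P i).card)

/-- The set of alternatives approved by every voter in `V`. -/
def commonApproved {A : Type} [Fintype A] {n : ℕ} (P : Profile A n) (V : Finset (Fin n)) :
    Finset A :=
  Finset.univ.filter (fun a => ∀ i ∈ V, a ∈ P i)

/-- `V` is an `ℓ`-cohesive group for `(P, k)`: `|V| ≥ ℓ·n/k` and `|⋂_{i∈V} P i| ≥ ℓ`. -/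
def Cohesive {A : Type} [Fintype A] {n : ℕ} (P : Profile A n) (k ℓ : ℕ)
    (V : Finset (Fin n)) : Prop :=
  ℓ * n ≤ V.card * k ∧ ℓ ≤ (commonApproved P V).card

/-- Committee `W` (of size `k`) satisfies justified representation for `(P, k)`. -/
def JRsat {A : Type} [Fintype A] [DecidableEq A] {n : ℕ} (P : Profile A n) (k : ℕ)
    (W : Finset A) : Prop :=
  W.card = k ∧ ∀ V : Finset (Fin n), Cohesive P k 1 V → ∃ i ∈ V, (P i ∩ W).Nonempty

/-- Committee `W` satisfies proportional justified representation for `(P, k)`. -/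
def PJRsat {A : Type} [Fintype A] [DecidableEq A] {n : ℕ} (P : Profile A n) (k : ℕ)
    (W : Finset A) : Prop :=
  W.card = k ∧ ∀ (ℓ : ℕ) (V : Finset (Fin n)), 1 ≤ ℓ → Cohesive P k ℓ V →
    ℓ ≤ (W ∩ V.biUnion P).card

/-- Committee `W` satisfies extended justified representation for `(P, k)`. -/
def EJRsat {A : Type} [Fintype A] [DecidableEq A] {n : ℕ} (P : Profile A n) (k : ℕ)
    (W : Finset A) : Prop :=
  W.card = k ∧ ∀ (ℓ : ℕ) (V : Finset (Fin n)), 1 ≤ ℓ → Cohesive P k ℓ V →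
    ∃ i ∈ V, ℓ ≤ (P i ∩ W).card

/-- `W` is a Condorcet committee for `(P, k)`: against every other size-`k` committee,
strictly more than half of the voters prefer `W`. -/
def CondorcetCommittee {A : Type} [Fintype A] [DecidableEq A] {n : ℕ} (P : Profile A n)
    (k : ℕ) (W : Finset A) : Prop :=
  W.card = k ∧ ∀ W' : Finset A, W'.card = k → W' ≠ W →
    n < 2 * (Finset.univ.filter
      (fun i : Fin n => (P i ∩ W').card < (P i ∩ W).card)).card

/-- A randomized approval-based committee (ABC) rule: for each profile and committee size `k`,
a probability distribution over the size-`k` committees. -/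
structure ABCRule (A : Type) [Fintype A] [DecidableEq A] (n : ℕ) where
  prob : Profile A n → ℕ → Finset A → ℝ
  nonneg : ∀ P k W, 0 ≤ prob P k W
  size_eq : ∀ P k W, prob P k W ≠ 0 → W.card = k
  sum_one : ∀ P k, k ≤ Fintype.card A →
    ∑ W ∈ Finset.univ.filter (fun W : Finset A => W.card = k), prob P k W = 1

variable {A : Type} [Fintype A] [DecidableEq A] {n : ℕ}

/-- ε-differential privacy at committee size `k`. -/
def DPAt (f : ABCRule A n) (k : ℕ) (ε : ℝ) : Prop :=
  ∀ (P P' : Profile A n) (W : Finset A),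
    Neighboring P P' → f.prob P k W ≤ Real.exp ε * f.prob P' k W

/-- ε-differential privacy: single-ballot changes alter each committee's winning
probability by a factor of at most `e^ε`. -/
def DP (f : ABCRule A n) (ε : ℝ) : Prop := ∀ k : ℕ, DPAt f k ε

/-- Neutrality: the rule commutes with permutations of the alternatives. -/
def Neutral (f : ABCRule A n) : Prop :=
  ∀ (σ : Equiv.Perm A) (P : Profile A n) (k : ℕ) (W : Finset A),
    f.prob (fun i => (P i).image σ) k (W.image σ) = f.prob P k W

/-- θ-JR: each JR committee wins with probability at least θ times that of each non-JR one. -/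
def ThetaJR (f : ABCRule A n) (θ : ℝ) : Prop :=
  ∀ (P : Profile A n) (k : ℕ) (W₁ W₂ : Finset A),
    JRsat P k W₁ → W₂.card = k → ¬ JRsat P k W₂ →
      θ * f.prob P k W₂ ≤ f.prob P k W₁

/-- ρ-PJR. -/
def RhoPJR (f : ABCRule A n) (ρ : ℝ) : Prop :=
  ∀ (P : Profile A n) (k : ℕ) (W₁ W₂ : Finset A),
    PJRsat P k W₁ → W₂.card = k → ¬ PJRsat P k W₂ →
      ρ * f.prob P k W₂ ≤ f.prob P k W₁

/-- κ-EJR. -/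
def KappaEJR (f : ABCRule A n) (κ : ℝ) : Prop :=
  ∀ (P : Profile A n) (k : ℕ) (W₁ W₂ : Finset A),
    EJRsat P k W₁ → W₂.card = k → ¬ EJRsat P k W₂ →
      κ * f.prob P k W₂ ≤ f.prob P k W₁

/-- Exact Condorcet criterion: whenever a Condorcet committee exists, it wins with
probability one. -/
def CondorcetCrit (f : ABCRule A n) : Prop :=
  ∀ (P : Profile A n) (k : ℕ) (W : Finset A),
    CondorcetCommittee P k W → f.prob P k W = 1

/-- η-Condorcet criterion. -/
def EtaCC (f : ABCRule A n) (η : ℝ) : Prop :=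
  ∀ (P : Profile A n) (k : ℕ) (Wc W : Finset A),
    CondorcetCommittee P k Wc → W.card = k → W ≠ Wc →
      η * f.prob P k W ≤ f.prob P k Wc

/-- Exact Pareto efficiency at committee size `k`: no committee in the support is
Pareto-dominated by another size-`k` committee. -/
def ParetoEffAt (f : ABCRule A n) (k : ℕ) : Prop :=
  ∀ (P : Profile A n) (W : Finset A), f.prob P k W ≠ 0 →
    ∀ W' : Finset A, W'.card = k → ¬ ParetoDom P W' W

/-- β-Pareto efficiency at committee size `k`. -/
def BetaPEAt (f : ABCRule A n) (k : ℕ) (β : ℝ) : Prop :=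
  ∀ (P : Profile A n) (W₁ W₂ : Finset A), W₁.card = k → W₂.card = k →
    ParetoDom P W₁ W₂ → β * f.prob P k W₂ ≤ f.prob P k W₁

/-- The approval voting score of a committee. -/
def AV (P : Profile A n) (W : Finset A) : ℕ := ∑ j, (P j ∩ W).card

/-- The set of size-`k` committees satisfying JR for `(P, k)`. -/
def JRset (P : Profile A n) (k : ℕ) : Finset (Finset A) :=
  Finset.univ.filter (fun W => JRsat P k W)

/-- Auxiliary: in the profile where everyone approves `Z` except voter `v` who approves
`insert x Z`, any size-`k` committee meeting `Z` in `≥ k-1` elements and `insert x Z` in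
`≥ k` elements satisfies PJR. -/
lemma pjr_aux (hn0 : 0 < n) {k : ℕ} (Z : Finset A) (x : A) (v : Fin n)
    (U : Finset A) (hU : U.card = k) (h1 : k - 1 ≤ (U ∩ Z).card)
    (h2 : k ≤ (U ∩ insert x Z).card) :
    PJRsat (fun i : Fin n => if i = v then insert x Z else Z) k U := by
  refine ⟨hU, fun ℓ V hℓ hcoh => ?_⟩
  obtain ⟨hc1, hc2⟩ := hcoh
  have hVne : V.Nonempty := by
    rcases V.eq_empty_or_nonempty with h | h
    · exfalso
      rw [h] at hc1
      simp at hc1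
      have := Nat.mul_pos hℓ hn0
      omega
    · exact h
  have hVcard : V.card ≤ n := by
    have := V.card_le_univ
    simpa using this
  have hℓk : ℓ ≤ k := by
    have h5 : ℓ * n ≤ k * n := by
      calc ℓ * n ≤ V.card * k := hc1
        _ ≤ n * k := Nat.mul_le_mul hVcard le_rfl
        _ = k * n := Nat.mul_comm n k
    exact Nat.le_of_mul_le_mul_right h5 hn0
  have hZb : Z ⊆ V.biUnion (fun i : Fin n => if i = v then insert x Z else Z) := by
    intro z hz
    obtain ⟨i0, hi0⟩ := hVne
    refine Finset.mem_biUnion.mpr ⟨i0, hi0, ?_⟩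
    by_cases h : i0 = v <;> simp [h, hz]
  rcases Nat.lt_or_ge ℓ k with hlt | hge
  · have : (U ∩ Z).card ≤ (U ∩ V.biUnion (fun i : Fin n => if i = v then insert x Z else Z)).card :=
      Finset.card_le_card (Finset.inter_subset_inter (subset_refl U) hZb)
    omega
  · have hℓeq : ℓ = k := le_antisymm hℓk hge
    subst hℓeq
    have hVn : n ≤ V.card := by
      have h5 : ℓ * n ≤ ℓ * V.card := by
        calc ℓ * n ≤ V.card * ℓ := hc1
          _ = ℓ * V.card := Nat.mul_comm _ _
      exact Nat.le_of_mul_le_mul_left h5 hℓ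
    have hVuniv : V = Finset.univ := by
      apply V.eq_univ_of_card
      rw [Fintype.card_fin]
      omega
    have hsub : insert x Z ⊆ V.biUnion (fun i : Fin n => if i = v then insert x Z else Z) := by
      intro z hz
      refine Finset.mem_biUnion.mpr ⟨v, by simp [hVuniv], ?_⟩
      simp [hz]
    have : (U ∩ insert x Z).card ≤
        (U ∩ V.biUnion (fun i : Fin n => if i = v then insert x Z else Z)).card :=
      Finset.card_le_card (Finset.inter_subset_inter (subset_refl U) hsub)
    omega

/-- Auxiliary: in the same profile, any committee meeting `insert x Z` in fewer than `k`
elements fails PJR (witnessed by the grand `k`-cohesive coalition). -/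
lemma notpjr_aux (hn0 : 0 < n) {k : ℕ} (hk : 0 < k) (Z : Finset A) (hZ : Z.card = k)
    (x : A) (v : Fin n) (U : Finset A) (h : (U ∩ insert x Z).card < k) :
    ¬ PJRsat (fun i : Fin n => if i = v then insert x Z else Z) k U := by
  rintro ⟨-, hP⟩
  have hcoh : Cohesive (fun i : Fin n => if i = v then insert x Z else Z) k k Finset.univ := by
    constructor
    · simp [Finset.card_univ, Fintype.card_fin, Nat.mul_comm]
    · have hsub : Z ⊆ commonApproved (fun i : Fin n => if i = v then insert x Z else Z)
          Finset.univ := by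
        intro z hz
        simp only [commonApproved, Finset.mem_filter, Finset.mem_univ, true_and]
        intro i _
        by_cases hi : i = v <;> simp [hi, hz]
      calc k = Z.card := hZ.symm
        _ ≤ _ := Finset.card_le_card hsub
  have h2 := hP k Finset.univ hk hcoh
  have hsub : Finset.univ.biUnion (fun i : Fin n => if i = v then insert x Z else Z)
      ⊆ insert x Z := by
    intro z hz
    obtain ⟨i, -, hi⟩ := Finset.mem_biUnion.mp hz
    by_cases hiv : i = v
    · simpa [hiv] using hi
    · simp only [if_neg hiv] at hi
      exact Finset.mem_insert_of_mem hi
  have h3 : (U ∩ Finset.univ.biUnion (fun i : Fin n => if i = v then insert x Z else Z)).card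
      ≤ (U ∩ insert x Z).card :=
    Finset.card_le_card (Finset.inter_subset_inter (subset_refl U) hsub)
  omega

/-- Zero probabilities propagate across the whole profile space under DP. -/
lemma zero_spread (f : ABCRule A n) {ε : ℝ} (hdp : DP f ε) (k : ℕ) (W : Finset A) :
    ∀ (d : ℕ) (P Q : Profile A n), (Finset.univ.filter (fun j => P j ≠ Q j)).card ≤ d →
      f.prob Q k W = 0 → f.prob P k W = 0 := by
  intro d
  induction d with
  | zero =>
    intro P Q h h0
    have hPQ : P = Q := by
      funext j
      by_contra hj
      have hmem : j ∈ Finset.univ.filter (fun j => P j ≠ Q j) := by simp [hj]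
      have := Finset.card_pos.mpr ⟨j, hmem⟩
      omega
    rw [hPQ]; exact h0
  | succ d ih =>
    intro P Q h h0
    by_cases hPQ : P = Q
    · rw [hPQ]; exact h0
    · have hex : ∃ i, P i ≠ Q i := by
        by_contra hc
        push_neg at hc
        exact hPQ (funext hc)
      obtain ⟨i, hi⟩ := hex
      have hnb : Neighboring P (Function.update P i (Q i)) :=
        ⟨i, fun j hj => (Function.update_of_ne hj _ _).symm⟩
      have h1 : f.prob (Function.update P i (Q i)) k W = 0 := by
        apply ih (Function.update P i (Q i)) Q _ h0
        have hsub : Finset.univ.filter (fun j => Function.update P i (Q i) j ≠ Q j)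
            ⊆ (Finset.univ.filter (fun j => P j ≠ Q j)).erase i := by
          intro j hj
          simp only [Finset.mem_filter, Finset.mem_univ, true_and] at hj
          have hji : j ≠ i := by
            intro hji
            subst hji
            exact hj (Function.update_self j (Q j) P)
          refine Finset.mem_erase.mpr ⟨hji, ?_⟩
          simp only [Finset.mem_filter, Finset.mem_univ, true_and]
          rwa [Function.update_of_ne hji] at hj
        have him : i ∈ Finset.univ.filter (fun j => P j ≠ Q j) := by simp [hi]
        have hc1 := Finset.card_le_card hsub
        rw [Finset.card_erase_of_mem him] at hc1
        omega
      have hle := hdp k P (Function.update P i (Q i)) W hnb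
      rw [h1, mul_zero] at hle
      exact le_antisymm hle (f.nonneg _ _ _)

/-- For ε > 0 and ρ > e^ε, no ABC rule satisfies both ε-DP and ρ-PJR
(assuming n = s·k for some s ≥ 1 and m ≥ k+2). -/
theorem dp_rhoPJR_upper (f : ABCRule A n) (ε ρ : ℝ) (hε : 0 < ε)
    (hρ : Real.exp ε < ρ) (k s : ℕ) (hk : 0 < k) (hs : 1 ≤ s) (hn : n = s * k)
    (hm : k + 2 ≤ Fintype.card A) :
    ¬ (DP f ε ∧ RhoPJR f ρ) := by
  rintro ⟨hdp, hpjr⟩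
  have hn0 : 0 < n := by
    rw [hn]; exact Nat.mul_pos (by omega) hk
  have hE : (0 : ℝ) < Real.exp ε := Real.exp_pos ε
  have hρ0 : (0 : ℝ) < ρ := lt_trans hE hρ
  -- every size-k committee has probability 0 at the all-empty profile
  have hzero : ∀ W : Finset A, W.card = k → f.prob (fun _ => (∅ : Finset A)) k W = 0 := by
    intro W hW
    obtain ⟨a, ha⟩ : ∃ a, a ∈ W := by
      have : W.Nonempty := Finset.card_pos.mp (by omega)
      exact this
    have hcardc : 1 < (Finset.univ \ W).card := by
      rw [Finset.card_sdiff_of_subset (Finset.subset_univ W), Finset.card_univ, hW]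
      omega
    obtain ⟨b, hb, c, hc, hbc⟩ := Finset.one_lt_card.mp hcardc
    have hbW : b ∉ W := (Finset.mem_sdiff.mp hb).2
    have hcW : c ∉ W := (Finset.mem_sdiff.mp hc).2
    have hab : a ≠ b := fun h => hbW (h ▸ ha)
    have hac : a ≠ c := fun h => hcW (h ▸ ha)
    set Z : Finset A := insert c (W.erase a) with hZdef
    set v : Fin n := ⟨0, hn0⟩ with hvdef
    set W2 : Finset A := insert b (W.erase a) with hW2def
    have hcea : c ∉ W.erase a := fun h => hcW (Finset.mem_of_mem_erase h)
    have hbea : b ∉ W.erase a := fun h => hbW (Finset.mem_of_mem_erase h)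
    have hea : (W.erase a).card = k - 1 := by
      rw [Finset.card_erase_of_mem ha, hW]
    have hZcard : Z.card = k := by
      rw [hZdef, Finset.card_insert_of_notMem hcea, hea]
      omega
    have hW2card : W2.card = k := by
      rw [hW2def, Finset.card_insert_of_notMem hbea, hea]
      omega
    -- intersection computations
    have hWZ : W ∩ Z = W.erase a := by
      ext t
      simp only [hZdef, Finset.mem_inter, Finset.mem_insert, Finset.mem_erase]
      constructor
      · rintro ⟨htW, h | h⟩
        · exact absurd (h ▸ htW) hcW
        · exact h
      · rintro ⟨h1, h2⟩
        exact ⟨h2, Or.inr ⟨h1, h2⟩⟩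
    have hWa : W ∩ insert a Z = W := by
      apply Finset.inter_eq_left.mpr
      intro t ht
      by_cases h : t = a
      · exact Finset.mem_insert.mpr (Or.inl h)
      · exact Finset.mem_insert_of_mem
          (hZdef ▸ Finset.mem_insert_of_mem (Finset.mem_erase.mpr ⟨h, ht⟩))
    have hW2b : W2 ∩ insert b Z = W2 := by
      apply Finset.inter_eq_left.mpr
      intro t ht
      rcases Finset.mem_insert.mp (hW2def ▸ ht) with h | h
      · exact Finset.mem_insert.mpr (Or.inl h)
      · exact Finset.mem_insert_of_mem (hZdef ▸ Finset.mem_insert_of_mem h)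
    have heaW2Z : W.erase a ⊆ W2 ∩ Z :=
      Finset.subset_inter (hW2def ▸ Finset.subset_insert _ _) (hZdef ▸ Finset.subset_insert _ _)
    have hW2a : W2 ∩ insert a Z = W.erase a := by
      ext t
      simp only [hW2def, hZdef, Finset.mem_inter, Finset.mem_insert, Finset.mem_erase]
      constructor
      · rintro ⟨h1 | h1, h2 | h2⟩
        · exact absurd (h1 ▸ h2) hab.symm
        · rcases h2 with h2 | h2
          · exact absurd (h1 ▸ h2) hbc
          · exact absurd (h1 ▸ h2.2) hbW
        · exact h1
        · exact h1
      · rintro ⟨h1, h2⟩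
        exact ⟨Or.inr ⟨h1, h2⟩, Or.inr (Or.inr ⟨h1, h2⟩)⟩
    have hWb : W ∩ insert b Z = W.erase a := by
      ext t
      simp only [hZdef, Finset.mem_inter, Finset.mem_insert, Finset.mem_erase]
      constructor
      · rintro ⟨htW, h | h⟩
        · exact absurd (h ▸ htW) hbW
        · rcases h with h | h
          · exact absurd (h ▸ htW) hcW
          · exact h
      · rintro ⟨h1, h2⟩
        exact ⟨h2, Or.inr (Or.inr ⟨h1, h2⟩)⟩
    -- PJR statuses
    have hj1 : PJRsat (fun i : Fin n => if i = v then insert a Z else Z) k W :=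
      pjr_aux hn0 Z a v W hW (by rw [hWZ, hea]) (by rw [hWa, hW])
    have hj2 : ¬ PJRsat (fun i : Fin n => if i = v then insert a Z else Z) k W2 :=
      notpjr_aux hn0 hk Z hZcard a v W2 (by rw [hW2a, hea]; omega)
    have hj3 : PJRsat (fun i : Fin n => if i = v then insert b Z else Z) k W2 :=
      pjr_aux hn0 Z b v W2 hW2card
        (by calc k - 1 = (W.erase a).card := hea.symm
              _ ≤ (W2 ∩ Z).card := Finset.card_le_card heaW2Z)
        (by rw [hW2b, hW2card])
    have hj4 : ¬ PJRsat (fun i : Fin n => if i = v then insert b Z else Z) k W :=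
      notpjr_aux hn0 hk Z hZcard b v W (by rw [hWb, hea]; omega)
    have hnb : Neighboring (fun i : Fin n => if i = v then insert a Z else Z)
        (fun i : Fin n => if i = v then insert b Z else Z) :=
      ⟨v, fun j hj => by simp [if_neg hj]⟩
    have hnb' : Neighboring (fun i : Fin n => if i = v then insert b Z else Z)
        (fun i : Fin n => if i = v then insert a Z else Z) :=
      ⟨v, fun j hj => by simp [if_neg hj]⟩
    set Pa : Profile A n := fun i : Fin n => if i = v then insert a Z else Z with hPa
    set Pb : Profile A n := fun i : Fin n => if i = v then insert b Z else Z with hPb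
    have e1 : ρ * f.prob Pa k W2 ≤ f.prob Pa k W := hpjr Pa k W W2 hj1 hW2card hj2
    have e2 : ρ * f.prob Pb k W ≤ f.prob Pb k W2 := hpjr Pb k W2 W hj3 hW hj4
    have e3 : f.prob Pa k W ≤ Real.exp ε * f.prob Pb k W := hdp k Pa Pb W hnb
    have e4 : f.prob Pb k W2 ≤ Real.exp ε * f.prob Pa k W2 := hdp k Pb Pa W2 hnb'
    have hy : 0 ≤ f.prob Pa k W2 := f.nonneg _ _ _
    have hx' : 0 ≤ f.prob Pb k W := f.nonneg _ _ _
    -- algebra: ρ² x' ≤ ρ y' ≤ ρ E y ≤ E x ≤ E² x', with E < ρ, forces x' = 0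
    have s1 : ρ * (ρ * f.prob Pb k W) ≤ ρ * f.prob Pb k W2 :=
      mul_le_mul_of_nonneg_left e2 hρ0.le
    have s2 : ρ * f.prob Pb k W2 ≤ ρ * (Real.exp ε * f.prob Pa k W2) :=
      mul_le_mul_of_nonneg_left e4 hρ0.le
    have s3 : Real.exp ε * (ρ * f.prob Pa k W2) ≤ Real.exp ε * f.prob Pa k W :=
      mul_le_mul_of_nonneg_left e1 hE.le
    have s4 : Real.exp ε * f.prob Pa k W ≤ Real.exp ε * (Real.exp ε * f.prob Pb k W) :=
      mul_le_mul_of_nonneg_left e3 hE.le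
    have hring : ρ * (Real.exp ε * f.prob Pa k W2)
        = Real.exp ε * (ρ * f.prob Pa k W2) := by ring
    have schain : ρ * (ρ * f.prob Pb k W)
        ≤ Real.exp ε * (Real.exp ε * f.prob Pb k W) := by
      calc ρ * (ρ * f.prob Pb k W) ≤ ρ * f.prob Pb k W2 := s1
        _ ≤ ρ * (Real.exp ε * f.prob Pa k W2) := s2
        _ = Real.exp ε * (ρ * f.prob Pa k W2) := hring
        _ ≤ Real.exp ε * f.prob Pa k W := s3
        _ ≤ Real.exp ε * (Real.exp ε * f.prob Pb k W) := s4
    have hx'0 : f.prob Pb k W = 0 := by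
      nlinarith [schain, hx', hE, hρ]
    have hx0 : f.prob Pa k W = 0 := by
      have : f.prob Pa k W ≤ 0 := by
        calc f.prob Pa k W ≤ Real.exp ε * f.prob Pb k W := e3
          _ = 0 := by rw [hx'0, mul_zero]
      exact le_antisymm this (f.nonneg _ _ _)
    -- propagate the zero to the all-empty profile
    refine zero_spread f hdp k W n (fun _ => (∅ : Finset A)) Pa ?_ hx0
    calc (Finset.univ.filter (fun j : Fin n => (fun _ => (∅ : Finset A)) j ≠ Pa j)).card
        ≤ (Finset.univ : Finset (Fin n)).card := Finset.card_filter_le _ _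
      _ = n := by simp
  -- contradiction with total probability 1
  have hsum := f.sum_one (fun _ => (∅ : Finset A)) k (by omega)
  rw [Finset.sum_eq_zero (fun W hW => hzero W (Finset.mem_filter.mp hW).2)] at hsum
  exact one_ne_zero hsum.symm
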